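/- arXiv:0804.4316 — 3 statements merged into one kernel-verified Lean document; each statement's English description precedes it below -/
import Mathlib

section
/- For any 2×2 complex matrix ρ, the Pauli-twirl of the map ρ ↦ Σ_k A_k ρ A_k† (with A_k the amplitude-damping/dephasing Kraus operators with parameters γ, λ as above), namely (1/4)·Σ_{A ∈ {I,X,Y,Z}} A† E(AρA†) A, equals (1-p_x-p_y-p_z)ρ + p_x XρX + p_y YρY + p_z ZρZ, where p_x = p_y = γ/4 and p_z = (2-γ-2√(1-λ-γ))/4. -/
open Matrix Complex

noncomputable def PauliX : Matrix (Fin 2) (Fin 2) ℂ := !![0, 1; 1, 0]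
noncomputable def PauliY : Matrix (Fin 2) (Fin 2) ℂ := !![0, -Complex.I; Complex.I, 0]
noncomputable def PauliZ : Matrix (Fin 2) (Fin 2) ℂ := !![1, 0; 0, -1]

noncomputable def A0 (γ lam : ℝ) : Matrix (Fin 2) (Fin 2) ℂ :=
  !![1, 0; 0, (Real.sqrt (1 - lam - γ) : ℂ)]
noncomputable def A1 (lam : ℝ) : Matrix (Fin 2) (Fin 2) ℂ :=
  !![0, 0; 0, (Real.sqrt lam : ℂ)]
noncomputable def A2 (γ : ℝ) : Matrix (Fin 2) (Fin 2) ℂ :=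
  !![0, (Real.sqrt γ : ℂ); 0, 0]

/-- The amplitude damping/dephasing channel. -/
noncomputable def ADchannel (γ lam : ℝ) (σ : Matrix (Fin 2) (Fin 2) ℂ) :
    Matrix (Fin 2) (Fin 2) ℂ :=
  A0 γ lam * σ * (A0 γ lam)ᴴ + A1 lam * σ * (A1 lam)ᴴ + A2 γ * σ * (A2 γ)ᴴ


lemma A0_ct (γ lam : ℝ) : (A0 γ lam)ᴴ = A0 γ lam := by
  ext i j; fin_cases i <;> fin_cases j <;> simp [A0, Matrix.conjTranspose_apply]

lemma A1_ct (lam : ℝ) : (A1 lam)ᴴ = A1 lam := by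
  ext i j; fin_cases i <;> fin_cases j <;> simp [A1, Matrix.conjTranspose_apply]

lemma A2_ct (γ : ℝ) : (A2 γ)ᴴ = !![0, 0; (Real.sqrt γ : ℂ), 0] := by
  ext i j; fin_cases i <;> fin_cases j <;> simp [A2, Matrix.conjTranspose_apply]

lemma PX_ct : PauliXᴴ = PauliX := by
  ext i j; fin_cases i <;> fin_cases j <;> simp [PauliX, Matrix.conjTranspose_apply]

lemma PY_ct : PauliYᴴ = PauliY := by
  ext i j; fin_cases i <;> fin_cases j <;> simp [PauliY, Matrix.conjTranspose_apply]

lemma PZ_ct : PauliZᴴ = PauliZ := by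
  ext i j; fin_cases i <;> fin_cases j <;> simp [PauliZ, Matrix.conjTranspose_apply]

set_option maxHeartbeats 1600000 in
/-- The Pauli-twirl of the amplitude damping/dephasing channel is the Pauli channel
with `p_x = p_y = γ/4` and `p_z = (2 - γ - 2√(1-λ-γ))/4`. -/
theorem pauli_twirl_channel (γ lam : ℝ) (hγ : 0 ≤ γ) (hlam : 0 ≤ lam) (h : γ + lam ≤ 1)
    (ρ : Matrix (Fin 2) (Fin 2) ℂ) :
    (1 / 4 : ℂ) •
      ((1 : Matrix (Fin 2) (Fin 2) ℂ)ᴴ *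
          ADchannel γ lam ((1 : Matrix (Fin 2) (Fin 2) ℂ) * ρ *
            (1 : Matrix (Fin 2) (Fin 2) ℂ)ᴴ) * 1 +
        PauliXᴴ * ADchannel γ lam (PauliX * ρ * PauliXᴴ) * PauliX +
        PauliYᴴ * ADchannel γ lam (PauliY * ρ * PauliYᴴ) * PauliY +
        PauliZᴴ * ADchannel γ lam (PauliZ * ρ * PauliZᴴ) * PauliZ) =
      (((1 - γ / 4 - γ / 4 - (2 - γ - 2 * Real.sqrt (1 - lam - γ)) / 4) : ℝ) : ℂ) • ρ +
      ((γ / 4 : ℝ) : ℂ) • (PauliX * ρ * PauliX) +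
      ((γ / 4 : ℝ) : ℂ) • (PauliY * ρ * PauliY) +
      (((2 - γ - 2 * Real.sqrt (1 - lam - γ)) / 4 : ℝ) : ℂ) • (PauliZ * ρ * PauliZ) := by
  have hlg : (0:ℝ) ≤ 1 - lam - γ := by linarith
  have hs1 : ((Real.sqrt (1 + (-lam - γ)) : ℂ)) ^ 2 = ((1 - lam - γ : ℝ) : ℂ) := by
    rw [show (1:ℝ)+(-lam-γ) = 1-lam-γ by ring, sq, ← Complex.ofReal_mul, Real.mul_self_sqrt hlg]
  have hs1' : ((Real.sqrt (1 - lam - γ)) : ℂ) ^ 2 = ((1 - lam - γ : ℝ) : ℂ) := by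
    rw [sq, ← Complex.ofReal_mul, Real.mul_self_sqrt hlg]
  have hs2 : ((Real.sqrt lam : ℂ)) ^ 2 = ((lam : ℝ) : ℂ) := by
    rw [sq, ← Complex.ofReal_mul, Real.mul_self_sqrt hlam]
  have hs3 : ((Real.sqrt γ : ℂ)) ^ 2 = ((γ : ℝ) : ℂ) := by
    rw [sq, ← Complex.ofReal_mul, Real.mul_self_sqrt hγ]
  simp only [ADchannel, Matrix.conjTranspose_one, Matrix.one_mul, Matrix.mul_one,
    A0_ct, A1_ct, A2_ct, PX_ct, PY_ct, PZ_ct]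
  ext i j
  fin_cases i <;> fin_cases j <;>
    ( simp [A0, A1, A2, PauliX, PauliY, PauliZ, Matrix.mul_apply, Fin.sum_univ_two,
        Matrix.vecMul, Matrix.vecHead, Matrix.vecTail, dotProduct, Function.comp,
        Matrix.add_apply, Matrix.smul_apply]
      ring_nf
      simp only [hs1, hs1', hs2, hs3, Complex.I_sq, Complex.I_pow_four]
      push_cast
      ring )
end

section
/- Let p be prime, s ≥ 1, q = p^s, m ≥ 2, and suppose 1 < μ_z < m and m - μ_z + 1 ≤ μ_x < m. Then the subfield subcode over F_p of GRM_q((q-1)(m - μ_x), m) is contained in the trace code tr_{q/p}(GRM_q(μ_z(q-1) - 1, m)). -/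
/-- The generalized Reed–Muller code `GRM_q(ν, m)` of length `q^m` over a field `L`
(evaluation-code form). -/
def GRM (L : Type*) [Field L] (m ν : ℕ) : Set ((Fin m → L) → L) :=
  {c | ∃ f : MvPolynomial (Fin m) L, f.totalDegree ≤ ν ∧
        ∀ x : Fin m → L, c x = MvPolynomial.eval x f}

/-- The code containment underlying the asymmetric EG LDPC construction: the subfield
subcode over `F_p` of `GRM_q((q-1)(m-μ_x), m)` is contained in the trace code
`tr_{q/p}(GRM_q(μ_z(q-1)-1, m))`. -/
theorem subfield_grm_subset_trace_grm
    (p s m μx μz : ℕ) (hp : p.Prime) (hs : 1 ≤ s) (hm : 2 ≤ m)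
    (hz1 : 1 < μz) (hzm : μz < m) (hx1 : m - μz + 1 ≤ μx) (hxm : μx < m)
    (K L : Type*) [Field K] [Field L] [Algebra K L] [Fintype K] [Fintype L]
    (hK : Fintype.card K = p) (hL : Fintype.card L = p ^ s) :
    {x : (Fin m → L) → K |
        (fun v => algebraMap K L (x v)) ∈ GRM L m ((p ^ s - 1) * (m - μx))} ⊆
      {x : (Fin m → L) → K |
        ∃ c ∈ GRM L m (μz * (p ^ s - 1) - 1),
          x = fun v => Algebra.trace K L (c v)} := by
  intro x hx
  obtain ⟨f, hdeg, hval⟩ := hx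
  have : FiniteDimensional K L := Module.Finite.of_finite
  obtain ⟨α, hα⟩ := Algebra.trace_surjective K L 1
  have hq : 1 ≤ p ^ s - 1 := by
    have := Nat.one_lt_two_pow_iff.mpr (by omega : s ≠ 0)
    have hp2 := hp.two_le
    have : 2 ^ s ≤ p ^ s := Nat.pow_le_pow_left hp2 s
    omega
  have harith : (p ^ s - 1) * (m - μx) ≤ μz * (p ^ s - 1) - 1 := by
    have h1 : m - μx ≤ μz - 1 := by omega
    have h2 : (p ^ s - 1) * (m - μx) ≤ (p ^ s - 1) * (μz - 1) :=
      Nat.mul_le_mul_left _ h1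
    have h3 : (p ^ s - 1) * (μz - 1) = μz * (p ^ s - 1) - (p ^ s - 1) := by
      rw [Nat.mul_sub_one, Nat.mul_comm]
    omega
  refine ⟨fun v => α * algebraMap K L (x v), ⟨MvPolynomial.C α * f, ?_, ?_⟩, ?_⟩
  · refine le_trans (le_trans (MvPolynomial.totalDegree_mul _ _) ?_) harith
    simpa using hdeg
  · intro v
    simp [hval v]
  · funext v
    have : α * algebraMap K L (x v) = x v • α := by
      rw [Algebra.smul_def]; ring
    show x v = Algebra.trace K L (α * algebraMap K L (x v))
    rw [this, map_smul, hα, smul_eq_mul, mul_one]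
end

section
/- For a binary narrow-sense primitive BCH code of length n = 2^m - 1 with design distance δ = 2t+1 where t ≤ 2^{⌈m/2⌉ - 1} - 1 (i.e., δ - 1 < 2^{⌈m/2⌉}), the 2-cyclotomic cosets modulo n of 1, 3, 5, …, 2t-1 are pairwise distinct and each has size exactly m; consequently the code has dimension n - m·t. -/
def cyclotomicCoset (n a : ℕ) : Set ℕ := {b | ∃ j : ℕ, b = a * 2 ^ j % n}

namespace BCHAux

/-- reduce exponent mod m -/
lemma reduce {m n : ℕ} (hn : 2 ≤ n) (h1 : 2 ^ m % n = 1) (a j : ℕ) :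
    a * 2 ^ j % n = a * 2 ^ (j % m) % n := by
  have h2 : (2:ℕ) ^ m ≡ 1 [MOD n] := by
    unfold Nat.ModEq; rw [h1, Nat.mod_eq_of_lt hn]
  have hj : j = m * (j / m) + j % m := (Nat.div_add_mod j m).symm
  have heq : a * 2 ^ j = a * 2 ^ (j % m) * (2 ^ m) ^ (j / m) := by
    rw [← pow_mul, mul_assoc, ← pow_add, Nat.mod_add_div j m]
  rw [heq]
  have h3 : a * 2 ^ (j % m) * (2 ^ m) ^ (j / m) ≡ a * 2 ^ (j % m) * 1 [MOD n] :=
    Nat.ModEq.mul_left _ ((h2.pow _).trans (by rw [one_pow]))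
  rw [mul_one] at h3
  exact h3

lemma modeq_pow_m {m n : ℕ} (hn : 2 ≤ n) (h1 : 2 ^ m % n = 1) (hm : 1 ≤ m) (a : ℕ) :
    a * 2 ^ m % n = a % n := by
  have := reduce hn h1 a m
  simpa using this

/-- membership characterization with bounded exponent -/
lemma mem_iff {m n : ℕ} (hn : 2 ≤ n) (h1 : 2 ^ m % n = 1) (hm : 1 ≤ m) (a x : ℕ) :
    x ∈ cyclotomicCoset n a ↔ ∃ j < m, x = a * 2 ^ j % n := by
  constructor
  · rintro ⟨j, rfl⟩
    exact ⟨j % m, Nat.mod_lt _ hm, reduce hn h1 a j⟩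
  · rintro ⟨j, _, rfl⟩; exact ⟨j, rfl⟩


/-- key bound lemma: odd a,b < 2^s cannot satisfy a*2^k ≡ b for 1 ≤ k ≤ m-s -/
lemma key {m a b k : ℕ} (hm : 2 ≤ m) (ha : Odd a) (hb : Odd b)
    (ha' : a < 2 ^ ((m + 1) / 2)) (hb' : b < 2 ^ ((m + 1) / 2))
    (hk1 : 1 ≤ k) (hk2 : k + (m + 1) / 2 ≤ m) :
    ¬ (a * 2 ^ k ≡ b [MOD 2 ^ m - 1]) := by
  intro h
  set s := (m + 1) / 2 with hs
  have hs1 : 2 * s ≤ m + 1 := by omega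
  have hs2 : m ≤ 2 * s := by omega
  have hsm : s ≤ m - 1 := by omega
  -- bound a * 2^k
  have hbound : a * 2 ^ k ≤ (2 ^ s - 1) * 2 ^ (m - s) := by
    apply Nat.mul_le_mul
    · omega
    · exact Nat.pow_le_pow_right (by norm_num) (by omega)
  have hsplit : (2:ℕ) ^ s * 2 ^ (m - s) = 2 ^ m := by
    rw [← pow_add]; congr 1; omega
  have h2ms : (2:ℕ) ^ (m - s) ≥ 2 := by
    calc (2:ℕ) ^ 1 ≤ 2 ^ (m - s) := Nat.pow_le_pow_right (by norm_num) (by omega)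
    _ = _ := rfl
  have hpos : (1:ℕ) ≤ 2 ^ s := Nat.one_le_two_pow
  have hA : a * 2 ^ k < 2 ^ m - 1 := by
    have h5 : a * 2 ^ k ≤ 2 ^ m - 2 ^ (m - s) := by
      calc a * 2 ^ k ≤ (2 ^ s - 1) * 2 ^ (m - s) := hbound
        _ = 2 ^ m - 2 ^ (m - s) := by rw [Nat.sub_mul, hsplit, one_mul]
    have h7 : (2:ℕ) ^ (m - s) ≤ 2 ^ m := Nat.pow_le_pow_right (by norm_num) (by omega)
    omega
  have hB : b < 2 ^ m - 1 := by
    have : (2:ℕ) ^ s ≤ 2 ^ (m - 1) := Nat.pow_le_pow_right (by norm_num) hsm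
    have h2 : (2:ℕ) ^ (m-1) * 2 = 2 ^ m := by
      rw [← pow_succ]; congr 1; omega
    omega
  have heq : a * 2 ^ k = b := by
    have := h
    unfold Nat.ModEq at this
    rwa [Nat.mod_eq_of_lt hA, Nat.mod_eq_of_lt hB] at this
  -- parity contradiction
  obtain ⟨u, hu⟩ := hb
  obtain ⟨k', rfl⟩ : ∃ k', k = k' + 1 := ⟨k - 1, by omega⟩
  have hpar : a * 2 ^ (k' + 1) = 2 * (a * 2 ^ k') := by rw [pow_succ]; ring
  omega

/-- a * 2^m ≡ a mod 2^m - 1 -/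
lemma modeq_m {m : ℕ} (hm : 2 ≤ m) (a : ℕ) : a * 2 ^ m ≡ a [MOD 2 ^ m - 1] := by
  have hn : 2 ≤ 2 ^ m - 1 := by
    have : (4:ℕ) ≤ 2 ^ m := by calc (4:ℕ) = 2^2 := rfl
                                   _ ≤ 2 ^ m := Nat.pow_le_pow_right (by norm_num) hm
    omega
  have h1 : 2 ^ m % (2 ^ m - 1) = 1 := by
    have h4 : (4:ℕ) ≤ 2 ^ m := by calc (4:ℕ) = 2^2 := rfl
                                     _ ≤ 2 ^ m := Nat.pow_le_pow_right (by norm_num) hm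
    have hadd := Nat.add_mod_left (2 ^ m - 1) 1
    rw [Nat.mod_eq_of_lt (a := 1) (by omega)] at hadd
    have he : 2 ^ m - 1 + 1 = 2 ^ m := by omega
    rw [he] at hadd
    exact hadd
  exact modeq_pow_m hn h1 (by omega) a

/-- no small period for odd a < 2^⌈m/2⌉ -/
lemma no_small_period {m a : ℕ} (hm : 2 ≤ m) (ha : Odd a)
    (ha' : a < 2 ^ ((m + 1) / 2)) {d : ℕ} (hd1 : 1 ≤ d) (hd2 : d < m) :
    ¬ (a * 2 ^ d ≡ a [MOD 2 ^ m - 1]) := by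
  intro h
  set n := 2 ^ m - 1 with hn
  have hPm : a * 2 ^ m ≡ a [MOD n] := modeq_m hm a
  -- minimal period
  have hex : ∃ e, 0 < e ∧ a * 2 ^ e ≡ a [MOD n] := ⟨d, hd1, h⟩
  classical
  set d0 := Nat.find hex with hd0
  obtain ⟨hd0pos, hP0⟩ := Nat.find_spec hex
  -- multiples of d0 are periods
  have hmul : ∀ q : ℕ, a * 2 ^ (q * d0) ≡ a [MOD n] := by
    intro q
    induction q with
    | zero => simpa using Nat.ModEq.refl a
    | succ q ih =>
      have : a * 2 ^ ((q + 1) * d0) = a * 2 ^ (q * d0) * 2 ^ d0 := by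
        rw [mul_assoc, ← pow_add]; congr 2; ring
      rw [this]
      calc a * 2 ^ (q * d0) * 2 ^ d0 ≡ a * 2 ^ d0 [MOD n] := ih.mul_right _
        _ ≡ a [MOD n] := hP0
  -- every period is a multiple of d0
  have hdvd : ∀ e, 0 < e → a * 2 ^ e ≡ a [MOD n] → d0 ∣ e := by
    intro e he hPe
    have hr : a * 2 ^ (e % d0) ≡ a [MOD n] := by
      have h1 : a * 2 ^ e = a * 2 ^ (e / d0 * d0) * 2 ^ (e % d0) := by
        rw [mul_assoc, ← pow_add, Nat.div_add_mod' e d0]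
      have h2 : a * 2 ^ (e / d0 * d0) * 2 ^ (e % d0) ≡ a * 2 ^ (e % d0) [MOD n] :=
        (hmul (e / d0)).mul_right _
      calc a * 2 ^ (e % d0) ≡ a * 2 ^ (e / d0 * d0) * 2 ^ (e % d0) [MOD n] := h2.symm
        _ = a * 2 ^ e := h1.symm
        _ ≡ a [MOD n] := hPe
    by_contra hnd
    have hrpos : 0 < e % d0 := by
      rcases Nat.eq_zero_or_pos (e % d0) with h0 | h0
      · exact absurd (Nat.dvd_of_mod_eq_zero h0) hnd
      · exact h0
    have := Nat.find_min hex (m := e % d0) (Nat.mod_lt _ hd0pos)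
    exact this ⟨hrpos, hr⟩
  have hd0m : d0 ∣ m := hdvd m (by omega) hPm
  have hd0d : d0 ∣ d := hdvd d hd1 h
  have hd0lt : d0 < m := lt_of_le_of_lt (Nat.le_of_dvd (by omega) hd0d) hd2
  -- d0 proper divisor of m hence d0 ≤ m/2
  obtain ⟨c, hc⟩ := hd0m
  have hc2 : 2 ≤ c := by
    rcases Nat.lt_or_ge c 2 with hlt | hge
    · interval_cases c <;> omega
    · exact hge
  have hle : 2 * d0 ≤ m := by
    calc 2 * d0 = d0 * 2 := by ring
      _ ≤ d0 * c := Nat.mul_le_mul_left d0 hc2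
      _ = m := hc.symm
  exact key hm ha ha ha' ha' hd0pos (by omega) hP0


lemma hn_of {m : ℕ} (hm : 2 ≤ m) : 2 ≤ 2 ^ m - 1 := by
  have : (4:ℕ) ≤ 2 ^ m := by
    calc (4:ℕ) = 2 ^ 2 := rfl
      _ ≤ 2 ^ m := Nat.pow_le_pow_right (by norm_num) hm
  omega

lemma h1_of {m : ℕ} (hm : 2 ≤ m) : 2 ^ m % (2 ^ m - 1) = 1 := by
  have h4 : (4:ℕ) ≤ 2 ^ m := by
    calc (4:ℕ) = 2 ^ 2 := rfl
      _ ≤ 2 ^ m := Nat.pow_le_pow_right (by norm_num) hm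
  have hadd := Nat.add_mod_left (2 ^ m - 1) 1
  rw [Nat.mod_eq_of_lt (a := 1) (by omega)] at hadd
  have he : 2 ^ m - 1 + 1 = 2 ^ m := by omega
  rw [he] at hadd
  exact hadd

lemma odd_n {m : ℕ} (hm : 1 ≤ m) : Odd (2 ^ m - 1) := by
  obtain ⟨m', rfl⟩ : ∃ m', m = m' + 1 := ⟨m - 1, by omega⟩
  have h2 : (2:ℕ) ^ (m' + 1) = 2 * 2 ^ m' := by rw [pow_succ]; ring
  have h1 : (1:ℕ) ≤ 2 ^ m' := Nat.one_le_two_pow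
  exact ⟨2 ^ m' - 1, by omega⟩

/-- injectivity of j ↦ a 2^j mod n on range m -/
lemma inj {m a : ℕ} (hm : 2 ≤ m) (ha : Odd a) (ha' : a < 2 ^ ((m + 1) / 2)) :
    ∀ i < m, ∀ j < m, a * 2 ^ i % (2 ^ m - 1) = a * 2 ^ j % (2 ^ m - 1) → i = j := by
  have aux : ∀ i j : ℕ, i ≤ j → j < m →
      a * 2 ^ i % (2 ^ m - 1) = a * 2 ^ j % (2 ^ m - 1) → i = j := by
    intro i j hij hjm heq
    by_contra hne
    have hlt : i < j := by omega
    have hco : Nat.gcd (2 ^ m - 1) (2 ^ i) = 1 := by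
      have : Nat.Coprime (2 ^ i) (2 ^ m - 1) :=
        Nat.Coprime.pow_left _ ((odd_n (by omega : 1 ≤ m)).coprime_two_left)
      exact Nat.Coprime.gcd_eq_one (Nat.Coprime.symm this)
    have hme : (2 ^ i) * (a * 2 ^ (j - i)) ≡ (2 ^ i) * a [MOD 2 ^ m - 1] := by
      have h1 : (2:ℕ) ^ i * (a * 2 ^ (j - i)) = a * 2 ^ j := by
        rw [← mul_assoc, mul_comm ((2:ℕ)^i) a, mul_assoc, ← pow_add]
        congr 2; omega
      have h2 : (2:ℕ) ^ i * a = a * 2 ^ i := mul_comm _ _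
      rw [h1, h2]
      exact heq.symm
    have hcan : a * 2 ^ (j - i) ≡ a [MOD 2 ^ m - 1] :=
      Nat.ModEq.cancel_left_of_coprime hco hme
    exact no_small_period hm ha ha' (by omega) (by omega) hcan
  intro i hi j hj heq
  rcases le_total i j with h | h
  · exact aux i j h hj heq
  · exact (aux j i h hi heq.symm).symm

def cosF (n m a : ℕ) : Finset ℕ := (Finset.range m).image (fun j => a * 2 ^ j % n)

lemma coset_eq_cosF {m n : ℕ} (hn : 2 ≤ n) (h1 : 2 ^ m % n = 1) (hm : 1 ≤ m) (a : ℕ) :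
    cyclotomicCoset n a = ↑(cosF n m a) := by
  ext x
  constructor
  · intro hx
    obtain ⟨j, hj, rfl⟩ := (mem_iff hn h1 hm a x).mp hx
    exact Finset.mem_coe.mpr (Finset.mem_image.mpr ⟨j, Finset.mem_range.mpr hj, rfl⟩)
  · intro hx
    obtain ⟨j, _, hfj⟩ := Finset.mem_image.mp (Finset.mem_coe.mp hx)
    exact ⟨j, hfj.symm⟩

lemma card_cosF {m a : ℕ} (hm : 2 ≤ m) (ha : Odd a) (ha' : a < 2 ^ ((m + 1) / 2)) :
    (cosF (2 ^ m - 1) m a).card = m := by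
  rw [cosF, Finset.card_image_of_injOn, Finset.card_range]
  intro i hi j hj hij
  exact inj hm ha ha' i (Finset.mem_coe.mp hi |> Finset.mem_range.mp)
    j (Finset.mem_coe.mp hj |> Finset.mem_range.mp) hij

lemma card_coset {m a : ℕ} (hm : 2 ≤ m) (ha : Odd a) (ha' : a < 2 ^ ((m + 1) / 2)) :
    Nat.card (cyclotomicCoset (2 ^ m - 1) a) = m := by
  rw [coset_eq_cosF (hn_of hm) (h1_of hm) (by omega) a, Nat.card_coe_set_eq _,
    Set.ncard_coe_finset, card_cosF hm ha ha']

/-- membership implies equal cosets -/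
lemma coset_eq_of_mem {m n a x : ℕ} (hn : 2 ≤ n) (h1 : 2 ^ m % n = 1) (hm : 1 ≤ m)
    (hx : x ∈ cyclotomicCoset n a) : cyclotomicCoset n x = cyclotomicCoset n a := by
  obtain ⟨j0, rfl⟩ := hx
  ext y
  constructor
  · rintro ⟨j, rfl⟩
    refine ⟨j0 + j, ?_⟩
    rw [Nat.mod_mul_mod, mul_assoc, ← pow_add]
  · rintro ⟨j, rfl⟩
    refine ⟨j + j0 * (m - 1), ?_⟩
    rw [Nat.mod_mul_mod, mul_assoc, ← pow_add]
    have hexp : j0 + (j + j0 * (m - 1)) = j + j0 * m := by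
      have : 1 ≤ m := hm
      cases m with
      | zero => omega
      | succ m' => simp only [Nat.add_sub_cancel]; ring
    rw [hexp]
    have h2 : a * 2 ^ (j + j0 * m) % n = a * 2 ^ ((j + j0 * m) % m) % n :=
      reduce hn h1 a _
    have h3 : a * 2 ^ j % n = a * 2 ^ (j % m) % n := reduce hn h1 a j
    rw [h2, h3, Nat.add_mul_mod_self_right]

lemma coset_two_mul {m n a : ℕ} (hn : 2 ≤ n) (h1 : 2 ^ m % n = 1) (hm : 1 ≤ m) :
    cyclotomicCoset n (2 * a) = cyclotomicCoset n a := by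
  ext y
  constructor
  · rintro ⟨j, rfl⟩
    refine ⟨j + 1, ?_⟩
    rw [pow_succ]
    ring_nf
  · rintro ⟨j, rfl⟩
    refine ⟨j + m - 1, ?_⟩
    have hexp : 2 * a * 2 ^ (j + m - 1) = a * 2 ^ (j + m) := by
      obtain ⟨m', rfl⟩ : ∃ m', m = m' + 1 := ⟨m - 1, by omega⟩
      have : j + (m' + 1) - 1 = j + m' := by omega
      rw [this, pow_add, pow_add, pow_succ]
      ring
    rw [hexp]
    have h2 : a * 2 ^ (j + m) % n = a * 2 ^ ((j + m) % m) % n := reduce hn h1 a _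
    have h3 : a * 2 ^ j % n = a * 2 ^ (j % m) % n := reduce hn h1 a j
    rw [h2, h3, Nat.add_mod_right]

lemma coset_oddPart {m n : ℕ} (hn : 2 ≤ n) (h1 : 2 ^ m % n = 1) (hm : 1 ≤ m) :
    ∀ i : ℕ, 1 ≤ i → ∃ c : ℕ, 2 * c + 1 ≤ i ∧
      cyclotomicCoset n i = cyclotomicCoset n (2 * c + 1) := by
  intro i
  induction i using Nat.strong_induction_on with
  | _ i ih =>
    intro hi
    rcases Nat.even_or_odd i with he | ho
    · obtain ⟨u, hu⟩ := he
      have hu2 : i = 2 * u := by omega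
      have hu1 : 1 ≤ u := by omega
      obtain ⟨c, hc1, hc2⟩ := ih u (by omega) hu1
      exact ⟨c, by omega, by rw [hu2, coset_two_mul hn h1 hm]; exact hc2⟩
    · obtain ⟨c, hc⟩ := ho
      exact ⟨c, by omega, by rw [hc]⟩


lemma distinct {m t a b : ℕ} (hm : 2 ≤ m) (ht : 2 * t < 2 ^ ((m + 1) / 2))
    (ha : a < t) (hb : b < t)
    (hEq : cyclotomicCoset (2 ^ m - 1) (2 * a + 1) = cyclotomicCoset (2 ^ m - 1) (2 * b + 1)) :
    a = b := by
  set n := 2 ^ m - 1 with hndef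
  set s := (m + 1) / 2 with hsdef
  have hn := hn_of hm
  have h1 := h1_of hm
  have hs1 : 2 * s ≤ m + 1 := by omega
  have hs2 : m ≤ 2 * s := by omega
  have hsm1 : (2:ℕ) ^ s ≤ 2 ^ (m - 1) := Nat.pow_le_pow_right (by norm_num) (by omega)
  have h2m : (2:ℕ) ^ (m - 1) * 2 = 2 ^ m := by rw [← pow_succ]; congr 1; omega
  have hblt : 2 * b + 1 < n := by omega
  have halt : 2 * a + 1 < n := by omega
  have hmem : (2 * b + 1) ∈ cyclotomicCoset n (2 * a + 1) := by
    rw [hEq]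
    exact ⟨0, by simp [Nat.mod_eq_of_lt hblt]⟩
  obtain ⟨j, hjm, hj⟩ := (mem_iff hn h1 (by omega) _ _).mp hmem
  rcases Nat.eq_zero_or_pos j with rfl | hjpos
  · simp only [pow_zero, mul_one] at hj
    rw [← hndef, Nat.mod_eq_of_lt halt] at hj
    omega
  · exfalso
    have hmod : (2 * a + 1) * 2 ^ j ≡ 2 * b + 1 [MOD n] := by
      unfold Nat.ModEq
      rw [← hj, Nat.mod_eq_of_lt hblt]
    have hoa : Odd (2 * a + 1) := odd_two_mul_add_one a
    have hob : Odd (2 * b + 1) := odd_two_mul_add_one b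
    have ha' : 2 * a + 1 < 2 ^ s := by omega
    have hb' : 2 * b + 1 < 2 ^ s := by omega
    rcases le_or_gt (j + s) m with hc | hc
    · exact key hm hoa hob ha' hb' hjpos hc hmod
    · set k := m - j with hk
      have hk1 : 1 ≤ k := by omega
      have hk2 : k + s ≤ m := by omega
      have hmod2 : (2 * b + 1) * 2 ^ k ≡ 2 * a + 1 [MOD n] := by
        have step : (2 * a + 1) * 2 ^ j * 2 ^ k ≡ (2 * b + 1) * 2 ^ k [MOD n] :=
          hmod.mul_right _
        have hjk : (2 * a + 1) * 2 ^ j * 2 ^ k = (2 * a + 1) * 2 ^ m := by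
          rw [mul_assoc, ← pow_add]; congr 2; omega
        rw [hjk] at step
        exact step.symm.trans (modeq_m hm _)
      exact key hm hob hoa hb' ha' hk1 hk2 hmod2

end BCHAux

/-- For a binary narrow-sense primitive BCH code of length `n = 2^m - 1` and design
distance `δ = 2t+1` with `δ - 1 < 2^⌈m/2⌉`, the cyclotomic cosets of `1,3,…,2t-1`
are pairwise distinct, each of size `m`; consequently the union of the cosets of
`1,…,δ-1` has size `m·t`, so the code has dimension `n - m·t`. -/
theorem bch_cosets_distinct_full (m t : ℕ) (hm : 1 ≤ m)
    (ht : 2 * t < 2 ^ ((m + 1) / 2)) :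
    (∀ a b : ℕ, a < t → b < t →
        cyclotomicCoset (2 ^ m - 1) (2 * a + 1) = cyclotomicCoset (2 ^ m - 1) (2 * b + 1) →
        a = b) ∧
    (∀ a : ℕ, a < t → Nat.card (cyclotomicCoset (2 ^ m - 1) (2 * a + 1)) = m) ∧
    Nat.card (⋃ i ∈ Finset.Icc 1 (2 * t), cyclotomicCoset (2 ^ m - 1) i) = m * t := by
  rcases Nat.eq_zero_or_pos t with rfl | htpos
  · refine ⟨fun a b ha => by omega, fun a ha => by omega, ?_⟩
    have : Finset.Icc 1 (2 * 0) = ∅ := rfl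
    rw [this]
    simp
  · -- t ≥ 1, hence m ≥ 2
    have hm2 : 2 ≤ m := by
      by_contra hlt
      interval_cases m <;> simp_all <;> omega
    set n := 2 ^ m - 1 with hndef
    have hn := BCHAux.hn_of hm2
    have h1 := BCHAux.h1_of hm2
    have hcardA : ∀ a : ℕ, a < t → Nat.card (cyclotomicCoset n (2 * a + 1)) = m := by
      intro a ha
      exact BCHAux.card_coset hm2 (odd_two_mul_add_one a) (by omega)
    refine ⟨fun a b ha hb hEq => BCHAux.distinct hm2 ht ha hb hEq, hcardA, ?_⟩
    have hU : (⋃ i ∈ Finset.Icc 1 (2 * t), cyclotomicCoset n i)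
        = ⋃ a ∈ Finset.range t, cyclotomicCoset n (2 * a + 1) := by
      ext x
      simp only [Set.mem_iUnion, exists_prop, Finset.mem_Icc, Finset.mem_range]
      constructor
      · rintro ⟨i, ⟨hi1, hi2⟩, hx⟩
        obtain ⟨c, hc1, hc2⟩ := BCHAux.coset_oddPart hn h1 (by omega) i hi1
        exact ⟨c, by omega, hc2 ▸ hx⟩
      · rintro ⟨a, ha, hx⟩
        exact ⟨2 * a + 1, ⟨by omega, by omega⟩, hx⟩
    have hU2 : (⋃ a ∈ Finset.range t, cyclotomicCoset n (2 * a + 1))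
        = ↑((Finset.range t).biUnion fun a => BCHAux.cosF n m (2 * a + 1)) := by
      ext x
      simp only [Set.mem_iUnion, exists_prop, Finset.mem_range, Finset.mem_coe,
        Finset.mem_biUnion]
      constructor
      · rintro ⟨a, ha, hx⟩
        rw [BCHAux.coset_eq_cosF hn h1 (by omega)] at hx
        exact ⟨a, ha, Finset.mem_coe.mp hx⟩
      · rintro ⟨a, ha, hx⟩
        refine ⟨a, ha, ?_⟩
        rw [BCHAux.coset_eq_cosF hn h1 (by omega)]
        exact Finset.mem_coe.mpr hx
    rw [hU, hU2, Nat.card_coe_set_eq, Set.ncard_coe_finset]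
    have hdisj : ∀ a ∈ Finset.range t, ∀ b ∈ Finset.range t, a ≠ b →
        Disjoint (BCHAux.cosF n m (2 * a + 1)) (BCHAux.cosF n m (2 * b + 1)) := by
      intro a ha b hb hne
      rw [Finset.disjoint_left]
      intro x hxa hxb
      apply hne
      have hxa' : x ∈ cyclotomicCoset n (2 * a + 1) := by
        rw [BCHAux.coset_eq_cosF hn h1 (by omega)]; exact Finset.mem_coe.mpr hxa
      have hxb' : x ∈ cyclotomicCoset n (2 * b + 1) := by
        rw [BCHAux.coset_eq_cosF hn h1 (by omega)]; exact Finset.mem_coe.mpr hxb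
      have e1 := BCHAux.coset_eq_of_mem hn h1 (by omega) hxa'
      have e2 := BCHAux.coset_eq_of_mem hn h1 (by omega) hxb'
      exact BCHAux.distinct hm2 ht (Finset.mem_range.mp ha) (Finset.mem_range.mp hb)
        (e1.symm.trans e2)
    rw [Finset.card_biUnion hdisj]
    have hcard : ∀ a ∈ Finset.range t, (BCHAux.cosF n m (2 * a + 1)).card = m := by
      intro a ha
      have ha' := Finset.mem_range.mp ha
      exact BCHAux.card_cosF hm2 (odd_two_mul_add_one a) (by omega)
    rw [Finset.sum_congr rfl hcard, Finset.sum_const, Finset.card_range, smul_eq_mul,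
      Nat.mul_comm]
end
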